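/- Let Ω ⊆ Ω₁ ⊆ ℝⁿ with Ω nonempty, let F be a Taylorian 1-field on Ω with κ := Γ¹(F;Ω) > 0, and let G be a minimal Lipschitz extension of F on Ω₁. Then for every x ∈ Ω₁ one has D_xg ∈ Λ_x and sup_{a∈Ω} Ψ⁻(F,x,a,D_xg) ≤ g_x ≤ inf_{a∈Ω} Ψ⁺(F,x,a,D_xg) ≤ u⁺(x), where u⁺(x) := sup_{v∈Λ_x} inf_{a∈Ω} Ψ⁺(F,x,a,v). -/

import Mathlib

noncomputable section

open scoped RealInnerProductSpace

section GammaDefs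

variable {H : Type*} [NormedAddCommGroup H] [InnerProductSpace ℝ H]

/-- Evaluation of the first-degree polynomial `F(x)` at `a`:
`F(x)(a) = f_x + ⟨D_xf, a - x⟩`. -/
def fieldEval (f : H → ℝ) (Df : H → H) (x a : H) : ℝ :=
  f x + ⟪Df x, a - x⟫

/-- `Γ¹(F; x, y) = 2 · sup_{a} |F(x)(a) - F(y)(a)| / (‖x-a‖² + ‖y-a‖²)` for `x ≠ y`. -/
def gammaPair (f : H → ℝ) (Df : H → H) (x y : H) : ℝ :=
  ⨆ a : H, 2 * |fieldEval f Df x a - fieldEval f Df y a| / (‖x - a‖ ^ 2 + ‖y - a‖ ^ 2)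

/-- The set of values `Γ¹(F; x, y)` for `x ≠ y` ranging over `S`. -/
def gammaVals (f : H → ℝ) (Df : H → H) (S : Set H) : Set ℝ :=
  {t | ∃ x ∈ S, ∃ y ∈ S, x ≠ y ∧ t = gammaPair f Df x y}

/-- `Γ¹(F; S) = sup_{x ≠ y ∈ S} Γ¹(F; x, y)` (real supremum, `0` if `S` has at most one point). -/
def gammaOn (f : H → ℝ) (Df : H → H) (S : Set H) : ℝ :=
  sSup (gammaVals f Df S)

end GammaDefs

section LipDefs

variable {α β : Type*} [NormedAddCommGroup α] [NormedAddCommGroup β]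

/-- The set of difference quotients `‖g x - g y‖ / ‖x - y‖`, `x ≠ y ∈ S`. -/
def lipVals (g : α → β) (S : Set α) : Set ℝ :=
  {t | ∃ x ∈ S, ∃ y ∈ S, x ≠ y ∧ t = ‖g x - g y‖ / ‖x - y‖}

/-- `Lip(g; S) = sup_{x ≠ y ∈ S} ‖g x - g y‖ / ‖x - y‖` (real supremum). -/
def lipOn (g : α → β) (S : Set α) : ℝ :=
  sSup (lipVals g S)

end LipDefs

section PsiDefs

variable {H : Type*} [NormedAddCommGroup H] [InnerProductSpace ℝ H]

/-- `v_{a,b} = ½(D_af + D_bf) + (κ/2)(b - a)`. -/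
def vab (Df : H → H) (κ : ℝ) (a b : H) : H :=
  (1 / 2 : ℝ) • (Df a + Df b) + (κ / 2) • (b - a)

/-- `α_{a,b}`. -/
def alphaab (f : H → ℝ) (Df : H → H) (κ : ℝ) (a b : H) : ℝ :=
  2 * κ * (f a - f b) + κ * ⟪Df a + Df b, b - a⟫
    - 1 / 2 * ‖Df a - Df b‖ ^ 2 + κ ^ 2 / 2 * ‖a - b‖ ^ 2

/-- `β_{a,b}(x)`. -/
def betaab (Df : H → H) (κ : ℝ) (a b x : H) : ℝ :=
  ‖(1 / 2 : ℝ) • (Df a - Df b) + (κ / 2) • ((2 : ℝ) • x - a - b)‖ ^ 2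

/-- `r_{a,b}(x) = √(α_{a,b} + β_{a,b}(x))`. -/
def rab (f : H → ℝ) (Df : H → H) (κ : ℝ) (a b x : H) : ℝ :=
  Real.sqrt (alphaab f Df κ a b + betaab Df κ a b x)

/-- `Λ_x = {v : ‖v - v_{a,b}‖ ≤ r_{a,b}(x) for all a, b ∈ Ω}`. -/
def Lambda (f : H → ℝ) (Df : H → H) (κ : ℝ) (Ω : Set H) (x : H) : Set H :=
  {v | ∀ a ∈ Ω, ∀ b ∈ Ω, ‖v - vab Df κ a b‖ ≤ rab f Df κ a b x}

/-- `Ψ⁺(F, x, a, v)`. -/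
def PsiPlus (f : H → ℝ) (Df : H → H) (κ : ℝ) (x a v : H) : ℝ :=
  f a + 1 / 2 * ⟪Df a + v, x - a⟫ + κ / 4 * ‖a - x‖ ^ 2 - 1 / (4 * κ) * ‖Df a - v‖ ^ 2

/-- `Ψ⁻(F, x, a, v)`. -/
def PsiMinus (f : H → ℝ) (Df : H → H) (κ : ℝ) (x a v : H) : ℝ :=
  f a + 1 / 2 * ⟪Df a + v, x - a⟫ - κ / 4 * ‖a - x‖ ^ 2 + 1 / (4 * κ) * ‖Df a - v‖ ^ 2

/-- `inf_{a ∈ Ω} Ψ⁺(F, x, a, v)`. -/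
def infPsiPlus (f : H → ℝ) (Df : H → H) (κ : ℝ) (Ω : Set H) (x v : H) : ℝ :=
  sInf {t | ∃ a ∈ Ω, t = PsiPlus f Df κ x a v}

/-- `sup_{a ∈ Ω} Ψ⁻(F, x, a, v)`. -/
def supPsiMinus (f : H → ℝ) (Df : H → H) (κ : ℝ) (Ω : Set H) (x v : H) : ℝ :=
  sSup {t | ∃ a ∈ Ω, t = PsiMinus f Df κ x a v}

/-- `u⁺(x) = sup_{v ∈ Λ_x} inf_{a ∈ Ω} Ψ⁺(F, x, a, v)`. -/
def uPlus (f : H → ℝ) (Df : H → H) (κ : ℝ) (Ω : Set H) (x : H) : ℝ :=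
  sSup {t | ∃ v ∈ Lambda f Df κ Ω x, t = infPsiPlus f Df κ Ω x v}

/-- `u⁻(x) = inf_{v ∈ Λ_x} sup_{a ∈ Ω} Ψ⁻(F, x, a, v)`. -/
def uMinus (f : H → ℝ) (Df : H → H) (κ : ℝ) (Ω : Set H) (x : H) : ℝ :=
  sInf {t | ∃ v ∈ Lambda f Df κ Ω x, t = supPsiMinus f Df κ Ω x v}

/-- `(g, Dg)` is a minimal Lipschitz extension of the 1-field `(f, Df)` of domain `Ω` to `H`. -/
def IsMLE (f : H → ℝ) (Df : H → H) (Ω : Set H) (g : H → ℝ) (Dg : H → H) : Prop :=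
  (∀ x ∈ Ω, g x = f x ∧ Dg x = Df x) ∧ gammaOn g Dg Set.univ = gammaOn f Df Ω

/-- Over extremal MLE. -/
def IsOverExtremal (f : H → ℝ) (Df : H → H) (Ω : Set H) (g₁ : H → ℝ) (Dg₁ : H → H) : Prop :=
  IsMLE f Df Ω g₁ Dg₁ ∧ ∀ g Dg, IsMLE f Df Ω g Dg → ∀ x, g x ≤ g₁ x

/-- Under extremal MLE. -/
def IsUnderExtremal (f : H → ℝ) (Df : H → H) (Ω : Set H) (g₂ : H → ℝ) (Dg₂ : H → H) : Prop :=
  IsMLE f Df Ω g₂ Dg₂ ∧ ∀ g Dg, IsMLE f Df Ω g Dg → ∀ x, g₂ x ≤ g x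

/-- Absolutely minimal Lipschitz extension. -/
def IsAMLE (f : H → ℝ) (Df : H → H) (Ω : Set H) (g : H → ℝ) (Dg : H → H) : Prop :=
  IsMLE f Df Ω g Dg ∧
    ∀ V : Set H, V.Nonempty → IsOpen V → Bornology.IsBounded V → closure V ⊆ Ωᶜ →
      gammaOn g Dg V = gammaOn g Dg (frontier V)

end PsiDefs

section Stmt11Aux

variable {H : Type*} [NormedAddCommGroup H] [InnerProductSpace ℝ H]

lemma stmt11_bdd_range (f : H → ℝ) (Df : H → H) (x y : H) (hxy : x ≠ y) :
    BddAbove (Set.range fun a =>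
      2 * |fieldEval f Df x a - fieldEval f Df y a| / (‖x - a‖ ^ 2 + ‖y - a‖ ^ 2)) := by
  set c : ℝ := |fieldEval f Df x x - fieldEval f Df y x| with hc
  set w : H := Df x - Df y with hw
  have hxy' : 0 < ‖x - y‖ := by
    rw [norm_pos_iff, sub_ne_zero]; exact hxy
  refine ⟨(2*c + ‖w‖^2) * (2 / ‖x - y‖^2) + 1, ?_⟩
  rintro t ⟨z, rfl⟩
  have hDlow : ‖x - y‖^2 ≤ 2 * (‖x - z‖^2 + ‖y - z‖^2) := by
    have h1 : ‖x - y‖ ≤ ‖x - z‖ + ‖y - z‖ := by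
      have := norm_sub_le_norm_sub_add_norm_sub x z y
      rwa [norm_sub_rev z y] at this
    nlinarith [norm_nonneg (x - z), norm_nonneg (y - z), sq_nonneg (‖x - z‖ - ‖y - z‖)]
  have hDpos : 0 < ‖x - z‖^2 + ‖y - z‖^2 := by nlinarith
  rw [div_le_iff₀ hDpos]
  have hdiff : fieldEval f Df x z - fieldEval f Df y z
      = (fieldEval f Df x x - fieldEval f Df y x) + ⟪w, z - x⟫ := by
    simp only [fieldEval, hw, inner_sub_left, inner_sub_right, sub_self, inner_zero_right]
    have : ⟪Df y, z - y⟫ = ⟪Df y, x - y⟫ + ⟪Df y, z - x⟫ := by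
      rw [← inner_add_right]; congr 1; abel
    linarith [this]
  have habs : |fieldEval f Df x z - fieldEval f Df y z| ≤ c + ‖w‖ * ‖x - z‖ := by
    rw [hdiff]
    refine (abs_add_le _ _).trans ?_
    have h2 : |⟪w, z - x⟫| ≤ ‖w‖ * ‖z - x‖ := abs_real_inner_le_norm w (z - x)
    rw [norm_sub_rev z x] at h2
    exact add_le_add le_rfl h2
  have key : 2 * |fieldEval f Df x z - fieldEval f Df y z|
      ≤ (2*c + ‖w‖^2) + (‖x - z‖^2 + ‖y - z‖^2) := by
    nlinarith [sq_nonneg (‖w‖ - ‖x - z‖), norm_nonneg (y - z), habs,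
      abs_nonneg (fieldEval f Df x z - fieldEval f Df y z)]
  have hT : (0:ℝ) < 2 / ‖x - y‖^2 := by positivity
  have hTS : (2 / ‖x - y‖^2) * ‖x - y‖^2 = 2 := by field_simp
  have h5 := mul_le_mul_of_nonneg_left hDlow (le_of_lt hT)
  have hTD : 1 ≤ (2 / ‖x - y‖^2) * (‖x - z‖^2 + ‖y - z‖^2) := by
    rw [hTS] at h5; linarith
  have hnn : 0 ≤ 2*c + ‖w‖^2 := by positivity
  have hfin := mul_le_mul_of_nonneg_left hTD hnn
  rw [mul_one] at hfin
  nlinarith [key, hfin, hDpos]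

lemma stmt11_psi_bounds (κ : ℝ) (hκ : 0 < κ) (x a v u : H) (gx fa : ℝ)
    (h : ∀ z : H, 2 * |gx + ⟪v, z - x⟫ - (fa + ⟪u, z - a⟫)| ≤ κ * (‖x - z‖ ^ 2 + ‖a - z‖ ^ 2)) :
    (fa + 1 / 2 * ⟪u + v, x - a⟫ - κ / 4 * ‖a - x‖ ^ 2 + 1 / (4 * κ) * ‖u - v‖ ^ 2 ≤ gx) ∧
    (gx ≤ fa + 1 / 2 * ⟪u + v, x - a⟫ + κ / 4 * ‖a - x‖ ^ 2 - 1 / (4 * κ) * ‖u - v‖ ^ 2) := by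
  have hκ' : κ ≠ 0 := ne_of_gt hκ
  set p : H := x - a with hp
  set q : H := v - u with hq
  have hsum : ∀ ε : ℝ, ε = 1 ∨ ε = -1 →
      ∀ z : H, z = (1/2 : ℝ) • (x + a) + (ε / (2*κ)) • q →
      ‖x - z‖ ^ 2 + ‖a - z‖ ^ 2 = 1/2 * ‖p‖^2 + 1/(2*κ^2) * ‖q‖^2 ∧
      ⟪v, z - x⟫ - ⟪u, z - a⟫ = ε/(2*κ) * ‖q‖^2 - 1/2 * ⟪u + v, p⟫ := by
    intro ε hε z hz
    have e1 : x - z = (1/2 : ℝ) • p - (ε/(2*κ)) • q := by rw [hz, hp]; module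
    have e2 : a - z = -((1/2 : ℝ) • p + (ε/(2*κ)) • q) := by rw [hz, hp]; module
    have e3 : z - x = (ε/(2*κ)) • q - (1/2 : ℝ) • p := by rw [hz, hp]; module
    have e4 : z - a = (ε/(2*κ)) • q + (1/2 : ℝ) • p := by rw [hz, hp]; module
    constructor
    · rw [e1, e2, norm_neg, norm_sub_sq_real, norm_add_sq_real]
      simp only [norm_smul, Real.norm_eq_abs, real_inner_smul_left, real_inner_smul_right,
        mul_pow, sq_abs]
      rcases hε with rfl | rfl <;> (field_simp; ring)
    · rw [e3, e4]
      simp only [inner_sub_right, inner_add_right, real_inner_smul_right, inner_add_left]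
      have hqq : ⟪v, q⟫ - ⟪u, q⟫ = ‖q‖^2 := by
        rw [← inner_sub_left, ← hq, real_inner_self_eq_norm_sq]
      linear_combination (ε/(2*κ)) * hqq
  have habs : ∀ t s : ℝ, 2 * |t| ≤ s → 2 * t ≤ s ∧ 2 * (-t) ≤ s := by
    intro t s hts
    constructor
    · linarith [le_abs_self t]
    · linarith [neg_le_abs t]
  have heq24 : 1/(2*κ) * ‖q‖^2 = 2 * (1/(4*κ) * ‖q‖^2) := by
    field_simp; ring
  have hq' : ‖u - v‖ = ‖q‖ := by rw [hq, norm_sub_rev]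
  have hp' : ‖a - x‖ = ‖p‖ := by rw [hp, norm_sub_rev]
  have hexp : κ * (1/2 * ‖p‖^2 + 1/(2*κ^2) * ‖q‖^2) = κ/4 * ‖p‖^2 + κ/4 * ‖p‖^2
      + 2 * (1/(4*κ) * ‖q‖^2) := by
    field_simp; ring
  constructor
  · obtain ⟨e1, e2⟩ := hsum (-1) (Or.inr rfl) _ rfl
    have h1 := h ((1/2 : ℝ) • (x + a) + ((-1) / (2*κ)) • q)
    rw [e1, hexp] at h1
    obtain ⟨-, h3⟩ := habs _ _ h1
    rw [show -(gx + ⟪v, ((1/2 : ℝ) • (x + a) + ((-1) / (2*κ)) • q) - x⟫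
        - (fa + ⟪u, ((1/2 : ℝ) • (x + a) + ((-1) / (2*κ)) • q) - a⟫))
        = fa - gx - (⟪v, ((1/2 : ℝ) • (x + a) + ((-1) / (2*κ)) • q) - x⟫
        - ⟪u, ((1/2 : ℝ) • (x + a) + ((-1) / (2*κ)) • q) - a⟫) by ring, e2] at h3
    rw [hq', hp']
    rw [show (-1 : ℝ)/(2*κ) * ‖q‖^2 = -(1/(2*κ) * ‖q‖^2) by ring, heq24] at h3
    linarith
  · obtain ⟨e1, e2⟩ := hsum 1 (Or.inl rfl) _ rfl
    have h1 := h ((1/2 : ℝ) • (x + a) + ((1:ℝ) / (2*κ)) • q)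
    rw [e1, hexp] at h1
    obtain ⟨h3, -⟩ := habs _ _ h1
    rw [show gx + ⟪v, ((1/2 : ℝ) • (x + a) + ((1:ℝ) / (2*κ)) • q) - x⟫
        - (fa + ⟪u, ((1/2 : ℝ) • (x + a) + ((1:ℝ) / (2*κ)) • q) - a⟫)
        = gx - fa + (⟪v, ((1/2 : ℝ) • (x + a) + ((1:ℝ) / (2*κ)) • q) - x⟫
        - ⟪u, ((1/2 : ℝ) • (x + a) + ((1:ℝ) / (2*κ)) • q) - a⟫) by ring, e2] at h3
    rw [hq', hp']
    rw [show (1 : ℝ)/(2*κ) * ‖q‖^2 = 1/(2*κ) * ‖q‖^2 by ring, heq24] at h3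
    linarith

lemma stmt11_key_id (f : H → ℝ) (Df : H → H) (κ : ℝ) (hκ : κ ≠ 0) (x a b v : H) :
    alphaab f Df κ a b + betaab Df κ a b x - ‖v - vab Df κ a b‖ ^ 2
      = 2 * κ * (PsiPlus f Df κ x a v - PsiMinus f Df κ x b v) := by
  simp only [alphaab, betaab, vab, PsiPlus, PsiMinus, ← real_inner_self_eq_norm_sq]
  simp only [inner_sub_left, inner_sub_right, inner_add_left, inner_add_right,
    real_inner_smul_left, real_inner_smul_right, inner_smul_left, inner_smul_right,
    RCLike.ofReal_real_eq_id, id_eq, real_inner_comm, conj_trivial]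
  field_simp
  ring

end Stmt11Aux

/-- Let `Ω ⊆ Ω₁ ⊆ ℝⁿ` with `Ω` nonempty, `F = (f, Df)` a Taylorian 1-field
on `Ω` with `κ := Γ¹(F;Ω) > 0`, and let `G = (g, Dg)` be a minimal Lipschitz extension of `F`
on `Ω₁`. Then for every `x ∈ Ω₁`: `D_xg ∈ Λ_x` and
`sup_{a∈Ω} Ψ⁻(F,x,a,D_xg) ≤ g_x ≤ inf_{a∈Ω} Ψ⁺(F,x,a,D_xg) ≤ u⁺(x)`. -/
theorem stmt_11 {n : ℕ} (hn : 1 ≤ n) (Ω Ω₁ : Set (EuclideanSpace ℝ (Fin n)))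
    (hΩne : Ω.Nonempty) (hsub : Ω ⊆ Ω₁)
    (f : EuclideanSpace ℝ (Fin n) → ℝ)
    (Df : EuclideanSpace ℝ (Fin n) → EuclideanSpace ℝ (Fin n))
    (hTay : BddAbove (gammaVals f Df Ω))
    (hκpos : 0 < gammaOn f Df Ω)
    (g : EuclideanSpace ℝ (Fin n) → ℝ)
    (Dg : EuclideanSpace ℝ (Fin n) → EuclideanSpace ℝ (Fin n))
    (hext : ∀ x ∈ Ω, g x = f x ∧ Dg x = Df x)
    (hmin : gammaOn g Dg Ω₁ = gammaOn f Df Ω) :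
    ∀ x ∈ Ω₁,
      Dg x ∈ Lambda f Df (gammaOn f Df Ω) Ω x ∧
      supPsiMinus f Df (gammaOn f Df Ω) Ω x (Dg x) ≤ g x ∧
      g x ≤ infPsiPlus f Df (gammaOn f Df Ω) Ω x (Dg x) ∧
      infPsiPlus f Df (gammaOn f Df Ω) Ω x (Dg x) ≤ uPlus f Df (gammaOn f Df Ω) Ω x := by
  intro x hx
  set κ := gammaOn f Df Ω with hκdef
  have hκ' : κ ≠ 0 := ne_of_gt hκpos
  obtain ⟨a₀, ha₀⟩ := hΩne
  have hbdd1 : BddAbove (gammaVals g Dg Ω₁) := by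
    by_contra hcon
    rw [gammaOn, Real.sSup_of_not_bddAbove hcon] at hmin
    exact absurd hmin.symm (ne_of_gt hκpos)
  have hPsi : ∀ a ∈ Ω, PsiMinus f Df κ x a (Dg x) ≤ g x ∧ g x ≤ PsiPlus f Df κ x a (Dg x) := by
    intro a ha
    obtain ⟨hga, hDa⟩ := hext a ha
    rcases eq_or_ne x a with rfl | hxa
    · constructor <;>
        simp [PsiMinus, PsiPlus, hga, hDa, sub_self, inner_zero_right, norm_zero]
    · have key : ∀ z, 2 * |g x + ⟪Dg x, z - x⟫ - (f a + ⟪Df a, z - a⟫)|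
          ≤ κ * (‖x - z‖^2 + ‖a - z‖^2) := by
        intro z
        have hDpos : (0:ℝ) < ‖x - z‖^2 + ‖a - z‖^2 := by
          rcases eq_or_ne z x with rfl | hz
          · have h0 : 0 < ‖a - z‖ := by
              rw [norm_pos_iff, sub_ne_zero]; exact fun h => hxa h.symm
            nlinarith [norm_nonneg (z - z), h0]
          · have h0 : 0 < ‖x - z‖ := by
              rw [norm_pos_iff, sub_ne_zero]; exact fun h => hz h.symm
            nlinarith [norm_nonneg (a - z), h0]
        have h1 : 2 * |fieldEval g Dg x z - fieldEval g Dg a z| / (‖x - z‖^2 + ‖a - z‖^2)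
            ≤ gammaPair g Dg x a := by
          rw [gammaPair]
          exact le_ciSup (stmt11_bdd_range g Dg x a hxa) z
        have h2 : gammaPair g Dg x a ≤ κ := by
          rw [← hmin, gammaOn]
          exact le_csSup hbdd1 ⟨x, hx, a, hsub ha, hxa, rfl⟩
        have h3 := (div_le_iff₀ hDpos).1 (h1.trans h2)
        have he : fieldEval g Dg x z - fieldEval g Dg a z
            = g x + ⟪Dg x, z - x⟫ - (f a + ⟪Df a, z - a⟫) := by
          simp [fieldEval, hga, hDa]
        rwa [he] at h3
      have hres := stmt11_psi_bounds κ hκpos x a (Dg x) (Df a) (g x) (f a) key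
      constructor
      · simpa only [PsiMinus] using hres.1
      · simpa only [PsiPlus] using hres.2
  have hΛ : ∀ a ∈ Ω, ∀ b ∈ Ω, ‖Dg x - vab Df κ a b‖ ≤ rab f Df κ a b x := by
    intro a ha b hb
    have hid := stmt11_key_id f Df κ hκ' x a b (Dg x)
    have hle : PsiMinus f Df κ x b (Dg x) ≤ PsiPlus f Df κ x a (Dg x) :=
      le_trans (hPsi b hb).1 (hPsi a ha).2
    have hsq : ‖Dg x - vab Df κ a b‖^2 ≤ alphaab f Df κ a b + betaab Df κ a b x := by
      nlinarith [hid, mul_nonneg (le_of_lt hκpos) (sub_nonneg.2 hle)]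
    calc ‖Dg x - vab Df κ a b‖ = Real.sqrt (‖Dg x - vab Df κ a b‖^2) :=
          (Real.sqrt_sq (norm_nonneg _)).symm
      _ ≤ rab f Df κ a b x := Real.sqrt_le_sqrt hsq
  have hΛmem : Dg x ∈ Lambda f Df κ Ω x := hΛ
  refine ⟨hΛmem, ?_, ?_, ?_⟩
  · simp only [supPsiMinus]
    apply csSup_le
    · exact ⟨PsiMinus f Df κ x a₀ (Dg x), a₀, ha₀, rfl⟩
    · rintro t ⟨a, ha, rfl⟩
      exact (hPsi a ha).1
  · simp only [infPsiPlus]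
    apply le_csInf
    · exact ⟨PsiPlus f Df κ x a₀ (Dg x), a₀, ha₀, rfl⟩
    · rintro t ⟨a, ha, rfl⟩
      exact (hPsi a ha).2
  · have hvbound : ∀ v, v ∈ Lambda f Df κ Ω x → ‖v - Df a₀‖ ≤ κ * ‖x - a₀‖ := by
      intro v hv
      have h1 := hv a₀ ha₀ a₀ ha₀
      have hva : vab Df κ a₀ a₀ = Df a₀ := by
        rw [vab, sub_self, smul_zero, add_zero]
        module
      have hal : alphaab f Df κ a₀ a₀ = 0 := by
        simp [alphaab, sub_self, inner_zero_right]
      have hvec : (1/2 : ℝ) • (Df a₀ - Df a₀) + (κ/2) • ((2:ℝ) • x - a₀ - a₀)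
          = κ • (x - a₀) := by module
      have hbe : betaab Df κ a₀ a₀ x = ‖κ • (x - a₀)‖^2 := by
        rw [betaab, hvec]
      rw [hva] at h1
      rw [rab, hal, hbe, zero_add, Real.sqrt_sq (norm_nonneg _), norm_smul,
        Real.norm_eq_abs, abs_of_pos hκpos] at h1
      exact h1
    have hbddU : BddAbove {t | ∃ v ∈ Lambda f Df κ Ω x, t = infPsiPlus f Df κ Ω x v} := by
      refine ⟨max (f a₀ + 1/2 * ((2*‖Df a₀‖ + κ*‖x - a₀‖) * ‖x - a₀‖) + κ/4 * ‖a₀ - x‖^2) 0, ?_⟩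
      rintro t ⟨v, hv, rfl⟩
      by_cases hb : BddBelow {t | ∃ a ∈ Ω, t = PsiPlus f Df κ x a v}
      · have hstep1 : infPsiPlus f Df κ Ω x v ≤ PsiPlus f Df κ x a₀ v := by
          simp only [infPsiPlus]
          exact csInf_le hb ⟨a₀, ha₀, rfl⟩
        refine le_trans (le_trans hstep1 ?_) (le_max_left _ _)
        rw [PsiPlus]
        have hiv : ⟪Df a₀ + v, x - a₀⟫ ≤ (2*‖Df a₀‖ + κ*‖x - a₀‖) * ‖x - a₀‖ := by
          refine le_trans (real_inner_le_norm _ _) ?_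
          have h3 : Df a₀ + v = (v - Df a₀) + (2:ℝ) • Df a₀ := by module
          have h2 : ‖Df a₀ + v‖ ≤ 2*‖Df a₀‖ + κ*‖x - a₀‖ := by
            rw [h3]
            refine le_trans (norm_add_le _ _) ?_
            have h4 : ‖(2:ℝ) • Df a₀‖ = 2 * ‖Df a₀‖ := by
              rw [norm_smul]; simp
            rw [h4]
            linarith [hvbound v hv]
          exact mul_le_mul_of_nonneg_right h2 (norm_nonneg _)
        have hnonneg : 0 ≤ 1/(4*κ) * ‖Df a₀ - v‖^2 := by positivity
        linarith [hiv, hnonneg]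
      · simp only [infPsiPlus]
        rw [Real.sInf_of_not_bddBelow hb]
        exact le_max_right _ _
    simp only [uPlus]
    exact le_csSup hbddU ⟨Dg x, hΛmem, rfl⟩
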